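/- Assume m = k (the case σ = τ, so S = {u ∈ ℤ^n : ⟨p_r, u⟩ ≥ 0 for r = 1, …, k} and the points form the group G_χ̄ = 𝔾_a^k ⋊ T). For a point y define z : S → K by z(u) := (−1)^{⟨p_1,u⟩ + … + ⟨p_k,u⟩} · y(−u − ∑_{r=1}^k ⟨p_r, u⟩·(e_1^{(r)} + e_2^{(r)})). Then: (a) for every u ∈ S the element −u − ∑_r ⟨p_r,u⟩(e_1^{(r)} + e_2^{(r)}) lies in S; (b) z is a point; (c) y*z = z*y = x_τ, i.e. z is the inverse of y. (This is the inverse-element formula of the Lemma in Section 9: χ^u(y^{−1}) = (−1)^{⟨p̄,u⟩} χ^{−u−⟨p̄,u⟩(ē_1+ē_2)}(y).) -/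

import Mathlib

open Finset

def pairZ {n : ℕ} (v u : Fin n → ℤ) : ℤ := ∑ i, v i * u i

def InS {n m : ℕ} (q : Fin m → Fin n → ℤ) (u : Fin n → ℤ) : Prop :=
  ∀ j, 0 ≤ pairZ (q j) u

def IsPoint {n m : ℕ} {K : Type*} [Field K] (q : Fin m → Fin n → ℤ)
    (x : (Fin n → ℤ) → K) : Prop :=
  x 0 = 1 ∧ ∀ u v : Fin n → ℤ, InS q u → InS q v → x (u + v) = x u * x v

def Compatible {n m k : ℕ} (hkm : k ≤ m) (q : Fin m → Fin n → ℤ)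
    (e : Fin k → Fin n → ℤ) : Prop :=
  (∀ r s : Fin k, pairZ (q (Fin.castLE hkm s)) (e r) = if r = s then -1 else 0) ∧
  (∀ (r : Fin k) (j : Fin m), k ≤ (j : ℕ) → 0 ≤ pairZ (q j) (e r))

noncomputable def rmul {n m k : ℕ} {K : Type*} [Field K] (hkm : k ≤ m)
    (q : Fin m → Fin n → ℤ) (e1 e2 : Fin k → Fin n → ℤ)
    (x y : (Fin n → ℤ) → K) : (Fin n → ℤ) → K :=
  fun u =>
    ∑ i ∈ Fintype.piFinset (fun r : Fin k =>
        Finset.range ((pairZ (q (Fin.castLE hkm r)) u).toNat + 1)),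
      (∏ r : Fin k, ((pairZ (q (Fin.castLE hkm r)) u).toNat.choose (i r) : K)) *
        x (u + ∑ r : Fin k, (i r : ℤ) • e2 r) *
        y (u + ∑ r : Fin k, (pairZ (q (Fin.castLE hkm r)) u - (i r : ℤ)) • e1 r)

noncomputable def xtau {n m k : ℕ} (K : Type*) [Field K] (hkm : k ≤ m)
    (q : Fin m → Fin n → ℤ) : (Fin n → ℤ) → K :=
  fun u => if ∀ r : Fin k, pairZ (q (Fin.castLE hkm r)) u = 0 then 1 else 0

/- ## Auxiliary lemmas -/

lemma pairZ_zero' {n : ℕ} (v : Fin n → ℤ) : pairZ v 0 = 0 := by simp [pairZ]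

lemma pairZ_add' {n : ℕ} (v u w : Fin n → ℤ) : pairZ v (u + w) = pairZ v u + pairZ v w := by
  simp [pairZ, mul_add, Finset.sum_add_distrib]

lemma pairZ_neg' {n : ℕ} (v u : Fin n → ℤ) : pairZ v (-u) = -pairZ v u := by
  simp [pairZ]

lemma pairZ_sub' {n : ℕ} (v u w : Fin n → ℤ) : pairZ v (u - w) = pairZ v u - pairZ v w := by
  rw [sub_eq_add_neg, pairZ_add', pairZ_neg', sub_eq_add_neg]

lemma pairZ_smul' {n : ℕ} (v : Fin n → ℤ) (c : ℤ) (u : Fin n → ℤ) :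
    pairZ v (c • u) = c * pairZ v u := by
  simp [pairZ, Finset.mul_sum, mul_left_comm]

lemma pairZ_sum' {n : ℕ} {ι : Type*} (v : Fin n → ℤ) (s : Finset ι) (f : ι → Fin n → ℤ) :
    pairZ v (∑ i ∈ s, f i) = ∑ i ∈ s, pairZ v (f i) := by
  classical
  induction s using Finset.induction with
  | empty => simp [pairZ]
  | @insert a s h ih => rw [Finset.sum_insert h, pairZ_add', ih, Finset.sum_insert h]

lemma pair_sum_smul {n k : ℕ} {q e : Fin k → Fin n → ℤ}
    (he : Compatible (le_refl k) q e) (a : Fin k → ℤ) (s : Fin k) :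
    pairZ (q s) (∑ r, a r • e r) = -(a s) := by
  rw [pairZ_sum']
  have h : ∀ r, pairZ (q s) (e r) = if r = s then -1 else 0 := fun r => he.1 r s
  simp only [pairZ_smul']
  simp [h, mul_ite, Finset.sum_ite_eq']

lemma alt_sum {K : Type*} [Field K] [CharZero K] (N : ℕ) :
    ∑ j ∈ Finset.range (N+1), ((N.choose j : K) * (-1)^j) = if N = 0 then 1 else 0 := by
  have h := Int.alternating_sum_range_choose (n := N)
  have h2 : ((∑ i ∈ Finset.range (N+1), (-1:ℤ)^i * N.choose i : ℤ) : K)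
      = ((if N = 0 then (1:ℤ) else 0) : K) := by rw [h]; split_ifs <;> simp
  have h3 : ((if N = 0 then (1:ℤ) else 0) : K) = if N = 0 then 1 else 0 := by
    split_ifs <;> simp
  rw [h3] at h2
  push_cast at h2
  rw [← h2]
  exact Finset.sum_congr rfl (fun _ _ => mul_comm _ _)

lemma neg_one_pow_sq {K : Type*} [Field K] (j : ℕ) : ((-1:K)^j) * ((-1:K)^j) = 1 := by
  rw [← pow_add, ← two_mul, pow_mul]; norm_num

lemma alt_sum' {K : Type*} [Field K] [CharZero K] (N : ℕ) :
    ∑ j ∈ Finset.range (N+1), ((N.choose j : K) * (-1)^(N-j)) = if N = 0 then 1 else 0 := by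
  have key : ∀ j ∈ Finset.range (N+1), ((N.choose j : K) * (-1)^(N-j))
      = (-1)^N * ((N.choose j : K) * (-1)^j) := by
    intro j hj
    have hj' : j ≤ N := Nat.lt_succ_iff.mp (Finset.mem_range.mp hj)
    have hkey : (-1:K)^(N-j) = (-1)^N * (-1)^j := by
      calc (-1:K)^(N-j) = ((-1)^(N-j) * (-1)^j) * (-1)^j := by
            rw [mul_assoc, neg_one_pow_sq, mul_one]
        _ = (-1)^N * (-1)^j := by rw [← pow_add, Nat.sub_add_cancel hj']
    rw [hkey]; ring
  rw [Finset.sum_congr rfl key, ← Finset.mul_sum, alt_sum]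
  split_ifs with h
  · subst h; norm_num
  · ring

theorem statement_5 {n k : ℕ} {K : Type*} [Field K] [CharZero K]
    (hn : 1 ≤ n) (hk : 1 ≤ k)
    (q : Fin k → Fin n → ℤ) (e1 e2 : Fin k → Fin n → ℤ)
    (he1 : Compatible (le_refl k) q e1) (he2 : Compatible (le_refl k) q e2)
    (y : (Fin n → ℤ) → K) (hy : IsPoint q y)
    (z : (Fin n → ℤ) → K)
    (hz : ∀ u : Fin n → ℤ,
      z u = (-1 : K) ^ (∑ r : Fin k, pairZ (q r) u) *
        y (-u - ∑ r : Fin k, pairZ (q r) u • (e1 r + e2 r))) :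
    (∀ u : Fin n → ℤ, InS q u →
        InS q (-u - ∑ r : Fin k, pairZ (q r) u • (e1 r + e2 r))) ∧
    IsPoint q z ∧
    (∀ u : Fin n → ℤ, InS q u →
        rmul (le_refl k) q e1 e2 y z u = xtau K (le_refl k) q u ∧
        rmul (le_refl k) q e1 e2 z y u = xtau K (le_refl k) q u) := by
  classical
  have hne : (-1 : K) ≠ 0 := by norm_num
  have hcast : ∀ s : Fin k, Fin.castLE (le_refl k) s = s := fun s => rfl
  -- splitting of the (e1 + e2)-sum
  have hW : ∀ a : Fin k → ℤ, (∑ r : Fin k, a r • (e1 r + e2 r))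
      = (∑ r : Fin k, a r • e1 r) + (∑ r : Fin k, a r • e2 r) := by
    intro a; rw [← Finset.sum_add_distrib]
    exact Finset.sum_congr rfl (fun r _ => smul_add _ _ _)
  have hsubsum : ∀ (a b : Fin k → ℤ) (e : Fin k → Fin n → ℤ),
      (∑ r : Fin k, (a r - b r) • e r)
        = (∑ r : Fin k, a r • e r) - (∑ r : Fin k, b r • e r) := by
    intro a b e; rw [← Finset.sum_sub_distrib]
    exact Finset.sum_congr rfl (fun r _ => sub_smul _ _ _)
  -- key pairing computation
  have key : ∀ (u : Fin n → ℤ) (s : Fin k),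
      pairZ (q s) (-u - ∑ r : Fin k, pairZ (q r) u • (e1 r + e2 r)) = pairZ (q s) u := by
    intro u s
    rw [pairZ_sub', pairZ_neg', hW, pairZ_add', pair_sum_smul he1, pair_sum_smul he2]
    ring
  have parta : ∀ u : Fin n → ℤ, InS q u →
      InS q (-u - ∑ r : Fin k, pairZ (q r) u • (e1 r + e2 r)) := by
    intro u hu j
    rw [key u j]; exact hu j
  -- part b
  have hz0 : z 0 = 1 := by
    rw [hz 0]
    have h1 : ∀ r : Fin k, pairZ (q r) (0 : Fin n → ℤ) = 0 := fun r => pairZ_zero' _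
    simp [h1, hy.1]
  have hzadd : ∀ u v : Fin n → ℤ, InS q u → InS q v → z (u + v) = z u * z v := by
    intro u v hu hv
    rw [hz (u+v), hz u, hz v]
    have hsum : ∀ s : Fin k, pairZ (q s) (u + v) = pairZ (q s) u + pairZ (q s) v :=
      fun s => pairZ_add' _ _ _
    have hphi : -(u+v) - ∑ r : Fin k, pairZ (q r) (u+v) • (e1 r + e2 r)
        = (-u - ∑ r : Fin k, pairZ (q r) u • (e1 r + e2 r))
          + (-v - ∑ r : Fin k, pairZ (q r) v • (e1 r + e2 r)) := by
      have h1 : (∑ r : Fin k, pairZ (q r) (u+v) • (e1 r + e2 r))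
          = (∑ r : Fin k, pairZ (q r) u • (e1 r + e2 r))
            + (∑ r : Fin k, pairZ (q r) v • (e1 r + e2 r)) := by
        rw [← Finset.sum_add_distrib]
        exact Finset.sum_congr rfl (fun r _ => by rw [hsum r, add_smul])
      rw [h1]; abel
    rw [hphi, hy.2 _ _ (parta u hu) (parta v hv)]
    have hexp : (∑ r : Fin k, pairZ (q r) (u+v))
        = (∑ r : Fin k, pairZ (q r) u) + (∑ r : Fin k, pairZ (q r) v) := by
      rw [← Finset.sum_add_distrib]; exact Finset.sum_congr rfl fun r _ => hsum r
    rw [hexp, zpow_add₀ hne]; ring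
  refine ⟨parta, ⟨hz0, hzadd⟩, ?_⟩
  -- part c
  intro u hu
  have hNc : ∀ r : Fin k, ((pairZ (q r) u).toNat : ℤ) = pairZ (q r) u :=
    fun r => Int.toNat_of_nonneg (hu r)
  -- common final step
  have hfinal : ∀ e : Fin k → Fin n → ℤ,
      (∏ r : Fin k, if (pairZ (q r) u).toNat = 0 then (1:K) else 0) *
        y (-(∑ r : Fin k, pairZ (q r) u • e r)) = xtau K (le_refl k) q u := by
    intro e
    by_cases hall : ∀ r : Fin k, pairZ (q r) u = 0
    · have h1 : (∑ r : Fin k, pairZ (q r) u • e r) = 0 :=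
        Finset.sum_eq_zero (fun r _ => by rw [hall r, zero_smul])
      have h2 : ∀ r : Fin k, (pairZ (q r) u).toNat = 0 := fun r => by rw [hall r]; rfl
      simp [xtau, hcast, h1, h2, hy.1, hall]
    · push_neg at hall
      obtain ⟨r0, hr0⟩ := hall
      have h2 : (pairZ (q r0) u).toNat ≠ 0 := by
        intro h0; apply hr0
        have := hNc r0; rw [h0] at this; exact this.symm
      have hprod : (∏ r : Fin k, if (pairZ (q r) u).toNat = 0 then (1:K) else 0) = 0 :=
        Finset.prod_eq_zero (Finset.mem_univ r0) (by simp [h2])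
      have hx : xtau K (le_refl k) q u = 0 := by
        simp only [xtau]
        rw [if_neg]; intro h; exact hr0 (h r0)
      rw [hprod, zero_mul, hx]
  constructor
  · -- y * z = xtau
    have step : ∀ i ∈ Fintype.piFinset (fun r : Fin k =>
          Finset.range ((pairZ (q r) u).toNat + 1)),
        (∏ r : Fin k, ((pairZ (q r) u).toNat.choose (i r) : K)) *
          y (u + ∑ r : Fin k, (i r : ℤ) • e2 r) *
          z (u + ∑ r : Fin k, (pairZ (q r) u - (i r : ℤ)) • e1 r)
        = (∏ r : Fin k, (((pairZ (q r) u).toNat.choose (i r) : K) * (-1)^(i r))) *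
            y (-(∑ r : Fin k, pairZ (q r) u • e1 r)) := by
      intro i hi
      have hile : ∀ r : Fin k, (i r : ℤ) ≤ pairZ (q r) u := by
        intro r
        have h1 : i r < (pairZ (q r) u).toNat + 1 :=
          Finset.mem_range.mp (Fintype.mem_piFinset.mp hi r)
        have h2 : i r ≤ (pairZ (q r) u).toNat := Nat.lt_succ_iff.mp h1
        calc ((i r : ℤ)) ≤ ((pairZ (q r) u).toNat : ℤ) := by exact_mod_cast h2
          _ = pairZ (q r) u := hNc r
      have hp2 : ∀ s : Fin k, pairZ (q s)
          (u + ∑ r : Fin k, (pairZ (q r) u - (i r : ℤ)) • e1 r) = (i s : ℤ) := by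
        intro s
        rw [pairZ_add', pair_sum_smul he1]; ring
      rw [hz]
      rw [Finset.sum_congr rfl (fun s _ => hp2 s)]
      have hsm : (∑ r : Fin k, pairZ (q r)
            (u + ∑ r' : Fin k, (pairZ (q r') u - (i r' : ℤ)) • e1 r') • (e1 r + e2 r))
          = ∑ r : Fin k, (i r : ℤ) • (e1 r + e2 r) :=
        Finset.sum_congr rfl (fun s _ => by rw [hp2 s])
      rw [hsm]
      have hexp : (∑ s : Fin k, (i s : ℤ)) = ((∑ s : Fin k, i s : ℕ) : ℤ) :=
        (Nat.cast_sum _ _).symm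
      rw [hexp, zpow_natCast]
      -- multiplicativity of y
      have hInA1 : InS q (u + ∑ r : Fin k, (i r : ℤ) • e2 r) := by
        intro s
        rw [pairZ_add', pair_sum_smul he2]
        have := hile s; omega
      have hInA2 : InS q (-(u + ∑ r : Fin k, (pairZ (q r) u - (i r : ℤ)) • e1 r)
          - ∑ r : Fin k, (i r : ℤ) • (e1 r + e2 r)) := by
        intro s
        rw [pairZ_sub', pairZ_neg', pairZ_add', pair_sum_smul he1, hW, pairZ_add',
          pair_sum_smul he1, pair_sum_smul he2]
        have := hu s; omega
      have hsum12 : (u + ∑ r : Fin k, (i r : ℤ) • e2 r)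
          + (-(u + ∑ r : Fin k, (pairZ (q r) u - (i r : ℤ)) • e1 r)
            - ∑ r : Fin k, (i r : ℤ) • (e1 r + e2 r))
          = -(∑ r : Fin k, pairZ (q r) u • e1 r) := by
        rw [hW, hsubsum]; abel
      have hy12 : y (u + ∑ r : Fin k, (i r : ℤ) • e2 r)
          * y (-(u + ∑ r : Fin k, (pairZ (q r) u - (i r : ℤ)) • e1 r)
            - ∑ r : Fin k, (i r : ℤ) • (e1 r + e2 r))
          = y (-(∑ r : Fin k, pairZ (q r) u • e1 r)) := by
        rw [← hy.2 _ _ hInA1 hInA2, hsum12]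
      rw [Finset.prod_mul_distrib, ← hy12, Finset.prod_pow_eq_pow_sum]
      ring
    calc rmul (le_refl k) q e1 e2 y z u
        = ∑ i ∈ Fintype.piFinset (fun r : Fin k =>
              Finset.range ((pairZ (q r) u).toNat + 1)),
            (∏ r : Fin k, (((pairZ (q r) u).toNat.choose (i r) : K) * (-1)^(i r))) *
              y (-(∑ r : Fin k, pairZ (q r) u • e1 r)) := Finset.sum_congr rfl step
      _ = (∏ r : Fin k, ∑ j ∈ Finset.range ((pairZ (q r) u).toNat + 1),
              (((pairZ (q r) u).toNat.choose j : K) * (-1)^j)) *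
            y (-(∑ r : Fin k, pairZ (q r) u • e1 r)) := by
          rw [← Finset.sum_mul]
          congr 1
          exact (Finset.prod_univ_sum
            (fun r : Fin k => Finset.range ((pairZ (q r) u).toNat + 1))
            (fun r j => ((pairZ (q r) u).toNat.choose j : K) * (-1)^j)).symm
      _ = (∏ r : Fin k, if (pairZ (q r) u).toNat = 0 then (1:K) else 0) *
            y (-(∑ r : Fin k, pairZ (q r) u • e1 r)) := by
          rw [Finset.prod_congr rfl (fun r _ => alt_sum ((pairZ (q r) u).toNat))]
      _ = xtau K (le_refl k) q u := hfinal e1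
  · -- z * y = xtau
    have step : ∀ i ∈ Fintype.piFinset (fun r : Fin k =>
          Finset.range ((pairZ (q r) u).toNat + 1)),
        (∏ r : Fin k, ((pairZ (q r) u).toNat.choose (i r) : K)) *
          z (u + ∑ r : Fin k, (i r : ℤ) • e2 r) *
          y (u + ∑ r : Fin k, (pairZ (q r) u - (i r : ℤ)) • e1 r)
        = (∏ r : Fin k, (((pairZ (q r) u).toNat.choose (i r) : K)
              * (-1)^((pairZ (q r) u).toNat - i r))) *
            y (-(∑ r : Fin k, pairZ (q r) u • e2 r)) := by
      intro i hi
      have hileN : ∀ r : Fin k, i r ≤ (pairZ (q r) u).toNat := by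
        intro r
        exact Nat.lt_succ_iff.mp (Finset.mem_range.mp (Fintype.mem_piFinset.mp hi r))
      have hile : ∀ r : Fin k, (i r : ℤ) ≤ pairZ (q r) u := by
        intro r
        calc ((i r : ℤ)) ≤ ((pairZ (q r) u).toNat : ℤ) := by exact_mod_cast hileN r
          _ = pairZ (q r) u := hNc r
      have hp1 : ∀ s : Fin k, pairZ (q s) (u + ∑ r : Fin k, (i r : ℤ) • e2 r)
          = pairZ (q s) u - (i s : ℤ) := by
        intro s
        rw [pairZ_add', pair_sum_smul he2]; ring
      rw [hz]
      rw [Finset.sum_congr rfl (fun s _ => hp1 s)]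
      have hsm : (∑ r : Fin k, pairZ (q r)
            (u + ∑ r' : Fin k, (i r' : ℤ) • e2 r') • (e1 r + e2 r))
          = ∑ r : Fin k, (pairZ (q r) u - (i r : ℤ)) • (e1 r + e2 r) :=
        Finset.sum_congr rfl (fun s _ => by rw [hp1 s])
      rw [hsm]
      have hexp : (∑ s : Fin k, (pairZ (q s) u - (i s : ℤ)))
          = ((∑ s : Fin k, ((pairZ (q s) u).toNat - i s) : ℕ) : ℤ) := by
        rw [Nat.cast_sum]
        refine Finset.sum_congr rfl (fun s _ => ?_)
        rw [Nat.cast_sub (hileN s), hNc s]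
      rw [hexp, zpow_natCast]
      have hInB : InS q (-(u + ∑ r : Fin k, (i r : ℤ) • e2 r)
          - ∑ r : Fin k, (pairZ (q r) u - (i r : ℤ)) • (e1 r + e2 r)) := by
        intro s
        rw [pairZ_sub', pairZ_neg', pairZ_add', pair_sum_smul he2, hW, pairZ_add',
          pair_sum_smul he1, pair_sum_smul he2]
        have := hile s; omega
      have hInD : InS q (u + ∑ r : Fin k, (pairZ (q r) u - (i r : ℤ)) • e1 r) := by
        intro s
        rw [pairZ_add', pair_sum_smul he1]
        have h1 : (0:ℤ) ≤ (i s : ℤ) := Int.natCast_nonneg _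
        omega
      have hsum12 : (-(u + ∑ r : Fin k, (i r : ℤ) • e2 r)
            - ∑ r : Fin k, (pairZ (q r) u - (i r : ℤ)) • (e1 r + e2 r))
          + (u + ∑ r : Fin k, (pairZ (q r) u - (i r : ℤ)) • e1 r)
          = -(∑ r : Fin k, pairZ (q r) u • e2 r) := by
        rw [hW, hsubsum, hsubsum]; abel
      have hy12 : y (-(u + ∑ r : Fin k, (i r : ℤ) • e2 r)
            - ∑ r : Fin k, (pairZ (q r) u - (i r : ℤ)) • (e1 r + e2 r))
          * y (u + ∑ r : Fin k, (pairZ (q r) u - (i r : ℤ)) • e1 r)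
          = y (-(∑ r : Fin k, pairZ (q r) u • e2 r)) := by
        rw [← hy.2 _ _ hInB hInD, hsum12]
      rw [Finset.prod_mul_distrib, ← hy12, Finset.prod_pow_eq_pow_sum]
      ring
    calc rmul (le_refl k) q e1 e2 z y u
        = ∑ i ∈ Fintype.piFinset (fun r : Fin k =>
              Finset.range ((pairZ (q r) u).toNat + 1)),
            (∏ r : Fin k, (((pairZ (q r) u).toNat.choose (i r) : K)
                * (-1)^((pairZ (q r) u).toNat - i r))) *
              y (-(∑ r : Fin k, pairZ (q r) u • e2 r)) := Finset.sum_congr rfl step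
      _ = (∏ r : Fin k, ∑ j ∈ Finset.range ((pairZ (q r) u).toNat + 1),
              (((pairZ (q r) u).toNat.choose j : K) * (-1)^((pairZ (q r) u).toNat - j))) *
            y (-(∑ r : Fin k, pairZ (q r) u • e2 r)) := by
          rw [← Finset.sum_mul]
          congr 1
          exact (Finset.prod_univ_sum
            (fun r : Fin k => Finset.range ((pairZ (q r) u).toNat + 1))
            (fun r j => ((pairZ (q r) u).toNat.choose j : K)
              * (-1)^((pairZ (q r) u).toNat - j))).symm
      _ = (∏ r : Fin k, if (pairZ (q r) u).toNat = 0 then (1:K) else 0) *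
            y (-(∑ r : Fin k, pairZ (q r) u • e2 r)) := by
          rw [Finset.prod_congr rfl (fun r _ => alt_sum' ((pairZ (q r) u).toNat))]
      _ = xtau K (le_refl k) q u := hfinal e2
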